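/- For every n : ℕ and every matrix M of size 2^n × 2^n over ℂ, M admits the expansion M = Σ_{a : Fin n → Fin 4} c_a · g_a, where the coefficients are given by c_a = 2^{-n} · Tr(M * g_a); i.e., the n-qubit Pauli tensors span the full matrix algebra of size 2^n with this explicit coefficient formula. -/
import Mathlib


open Matrix

/-- The four Pauli matrices σ_I, σ_X, σ_Y, σ_Z. -/
noncomputable def pauli : Fin 4 → Matrix (Fin 2) (Fin 2) ℂ
  | 0 => 1
  | 1 => !![0, 1; 1, 0]
  | 2 => !![0, -Complex.I; Complex.I, 0]
  | 3 => !![1, 0; 0, -1]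

/-- The `n`-qubit Pauli tensor `g_a = σ_{a 0} ⊗ ⋯ ⊗ σ_{a (n-1)}`, realized as a
matrix indexed by `Fin n → Fin 2` (a type of cardinality `2 ^ n`), whose entries
are given by the usual Kronecker-product formula. -/
noncomputable def pauliTensor {n : ℕ} (a : Fin n → Fin 4) :
    Matrix (Fin n → Fin 2) (Fin n → Fin 2) ℂ :=
  Matrix.of fun i j => ∏ k, pauli (a k) (i k) (j k)

/-- The number of `Y` labels in the Pauli string `a`. -/
def numY {n : ℕ} (a : Fin n → Fin 4) : ℕ :=
  (Finset.univ.filter fun k => a k = 2).card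

lemma pauli_orth (x y i j : Fin 2) :
    ∑ s : Fin 4, pauli s x y * pauli s i j =
      2 * ((if x = j then (1:ℂ) else 0) * (if y = i then 1 else 0)) := by
  fin_cases x <;> fin_cases y <;> fin_cases i <;> fin_cases j <;>
    simp [pauli, Fin.sum_univ_four, Matrix.one_apply, Complex.I_mul_I] <;> norm_num

lemma prod_ind {n : ℕ} (l j : Fin n → Fin 2) :
    (∏ m, if l m = j m then (1:ℂ) else 0) = if l = j then 1 else 0 := by
  by_cases h : l = j
  · simp [h]
  · obtain ⟨m, hm⟩ := Function.ne_iff.mp h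
    rw [if_neg h]
    exact Finset.prod_eq_zero (Finset.mem_univ m) (if_neg hm)

lemma sum_prod_swap {n : ℕ} (g : Fin n → Fin 4 → ℂ) :
    ∑ a : Fin n → Fin 4, ∏ m, g m (a m) = ∏ m, ∑ s, g m s := by
  rw [Finset.prod_univ_sum, Fintype.piFinset_univ]

/-- Every `2^n × 2^n` complex matrix expands in the Pauli basis with
coefficients `c_a = 2^{-n} · Tr(M * g_a)`. -/
theorem pauli_expansion (n : ℕ)
    (M : Matrix (Fin n → Fin 2) (Fin n → Fin 2) ℂ) :
    M = ∑ a : Fin n → Fin 4,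
      (((2 : ℂ) ^ n)⁻¹ * (M * pauliTensor a).trace) • pauliTensor a := by
  ext i j
  rw [Matrix.sum_apply]
  have key : ∀ a : Fin n → Fin 4,
      ((((2:ℂ)^n)⁻¹ * (M * pauliTensor a).trace) • pauliTensor a) i j
        = ((2:ℂ)^n)⁻¹ * ∑ k, ∑ l, M k l *
            ∏ m, (pauli (a m) (l m) (k m) * pauli (a m) (i m) (j m)) := by
    intro a
    simp only [Matrix.smul_apply, smul_eq_mul, Matrix.trace, Matrix.diag_apply,
      Matrix.mul_apply, pauliTensor, Matrix.of_apply, Finset.prod_mul_distrib,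
      Finset.sum_mul, mul_assoc]
  simp only [key, ← Finset.mul_sum]
  rw [Finset.sum_comm]
  have : ∀ k, ∑ a : Fin n → Fin 4, ∑ l, M k l *
      ∏ m, (pauli (a m) (l m) (k m) * pauli (a m) (i m) (j m))
    = ∑ l, M k l * ((2:ℂ)^n * ((if l = j then (1:ℂ) else 0) * (if k = i then 1 else 0))) := by
    intro k
    rw [Finset.sum_comm]
    refine Finset.sum_congr rfl fun l _ => ?_
    rw [← Finset.mul_sum]
    congr 1
    rw [sum_prod_swap (fun m s => pauli s (l m) (k m) * pauli s (i m) (j m))]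
    simp only [pauli_orth]
    rw [Finset.prod_mul_distrib, Finset.prod_const, Finset.prod_mul_distrib,
      prod_ind, prod_ind, Finset.card_univ, Fintype.card_fin]
  simp only [this]
  simp only [mul_ite, mul_one, mul_zero, ite_mul, zero_mul, Finset.sum_ite_eq',
    Finset.mem_univ, if_true]
  simp [Finset.sum_ite_eq', apply_ite]
  field_simp
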